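/- arXiv:2305.16666 — 3 statements merged into one kernel-verified Lean document; each statement's English description precedes it below -/
import Mathlib

section
/- Let O ⊆ ℝ^d be a nonempty open set, let α ∈ (0,1] and s ≥ 1 with α·s ≥ d, and let u : O → ℝ satisfy: |u(x)| ≤ 1 for all x ∈ O; u is α-Hölder with some constant C on O; and ∫_O (1 − u(x)²)^{−s} dx < ∞. Then |u(x)| < 1 for every x ∈ O. -/
open MeasureTheory Metric ENNReal

set_option maxHeartbeats 1000000 in
lemma aux_div (d : ℕ) (hd : 0 < d) (K α s ε : ℝ) (hK : 0 < K) (hα : 0 < α)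
    (hs : 0 < s) (hαs : (d : ℝ) ≤ α * s) (hε : 0 < ε) (hε1 : ε ≤ 1)
    (x₀ : EuclideanSpace ℝ (Fin d)) :
    ∫⁻ y in Metric.ball x₀ ε, (ENNReal.ofReal (K * ‖y - x₀‖ ^ α)) ^ (-s) = ⊤ := by
  haveI : Inhabited (Fin d) := ⟨⟨0, hd⟩⟩
  haveI : Nontrivial (EuclideanSpace ℝ (Fin d)) := inferInstance
  set g : EuclideanSpace ℝ (Fin d) → ℝ≥0∞ :=
    fun y => (ENNReal.ofReal (K * ‖y - x₀‖ ^ α)) ^ (-s) with hg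
  set v : ℝ≥0∞ := volume (ball (0 : EuclideanSpace ℝ (Fin d)) 1) with hv
  have hv0 : v ≠ 0 := (measure_ball_pos _ _ one_pos).ne'
  have hvtop : v ≠ ⊤ := measure_ball_lt_top.ne
  set r : ℕ → ℝ := fun n => ε / 2 ^ n with hrdef
  have hrpos : ∀ n, 0 < r n := fun n => by positivity
  have hr1 : ∀ n, r n ≤ 1 := fun n => by
    have : r n ≤ ε := by
      rw [hrdef]
      calc ε / 2 ^ n ≤ ε / 1 := by
            apply div_le_div_of_nonneg_left hε.le one_pos (one_le_pow₀ one_le_two)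
        _ = ε := div_one ε
    linarith
  have hrsucc : ∀ n, r (n + 1) = r n / 2 := fun n => by
    rw [hrdef]; simp [pow_succ]; ring
  set A : ℕ → Set (EuclideanSpace ℝ (Fin d)) :=
    fun n => ball x₀ (r n) \ ball x₀ (r (n + 1)) with hA
  have hrmono : ∀ {m n : ℕ}, m ≤ n → r n ≤ r m := fun {m n} h => by
    rw [hrdef]
    apply div_le_div_of_nonneg_left hε.le (by positivity)
    exact pow_le_pow_right₀ one_le_two h
  have hAsub : ∀ n, A n ⊆ ball x₀ ε := fun n =>
    (Set.diff_subset).trans (ball_subset_ball (by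
      have := hrmono (Nat.zero_le n); simpa [hrdef] using this))
  have hAmeas : ∀ n, MeasurableSet (A n) := fun n =>
    measurableSet_ball.diff measurableSet_ball
  have hdisj : Pairwise (Function.onFun Disjoint A) := by
    have key : ∀ m n : ℕ, m < n → Disjoint (A m) (A n) := by
      intro m n hmn
      refine Set.disjoint_left.2 fun x hxm hxn => ?_
      have h1 : x ∉ ball x₀ (r (m + 1)) := hxm.2
      have h2 : x ∈ ball x₀ (r n) := hxn.1
      exact h1 (ball_subset_ball (hrmono hmn) h2)
    intro m n hmn
    rcases hmn.lt_or_gt with h | h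
    · exact key m n h
    · exact (key n m h).symm
  -- per-annulus bound
  have key : ∀ n, ENNReal.ofReal (K ^ (-s) / 2) * v ≤ ∫⁻ y in A n, g y := by
    intro n
    have hrp := hrpos n
    have h1r := hr1 n
    -- pointwise bound on A n
    have hpt : ∀ y ∈ A n, ENNReal.ofReal ((K * r n ^ α) ^ (-s)) ≤ g y := by
      intro y hy
      have hyr : ‖y - x₀‖ ≤ r n := by
        have := (mem_ball.1 hy.1).le
        rwa [dist_eq_norm] at this
      have hle : K * ‖y - x₀‖ ^ α ≤ K * r n ^ α := by
        apply mul_le_mul_of_nonneg_left _ hK.le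
        exact Real.rpow_le_rpow (norm_nonneg _) hyr hα.le
      calc ENNReal.ofReal ((K * r n ^ α) ^ (-s))
          = ENNReal.ofReal (K * r n ^ α) ^ (-s) :=
            (ENNReal.ofReal_rpow_of_pos (by positivity)).symm
        _ ≤ ENNReal.ofReal (K * ‖y - x₀‖ ^ α) ^ (-s) := by
            rw [ENNReal.rpow_neg, ENNReal.rpow_neg]
            exact ENNReal.inv_le_inv.2
              (ENNReal.rpow_le_rpow (ENNReal.ofReal_le_ofReal hle) hs.le)
    have hmeasA : volume (A n) = (ENNReal.ofReal ((r n) ^ d) - ENNReal.ofReal ((r n / 2) ^ d)) * v := by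
      rw [hA]
      rw [measure_diff (ball_subset_ball (by rw [hrsucc n]; linarith))
        measurableSet_ball.nullMeasurableSet measure_ball_lt_top.ne]
      rw [Measure.addHaar_ball _ _ hrp.le, Measure.addHaar_ball _ _ (by positivity : (0:ℝ) ≤ r (n+1)),
        hrsucc n, finrank_euclideanSpace_fin, ENNReal.sub_mul (fun _ _ => hvtop)]
    have hA_lb : ENNReal.ofReal ((r n) ^ d / 2) * v ≤ volume (A n) := by
      rw [hmeasA, ← ENNReal.ofReal_sub _ (by positivity)]
      apply mul_le_mul_left (ENNReal.ofReal_le_ofReal _)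
      have h2d : (2:ℝ) ≤ 2 ^ d := by
        calc (2:ℝ) = 2 ^ 1 := (pow_one 2).symm
        _ ≤ 2 ^ d := pow_le_pow_right₀ one_le_two hd
      have : (r n / 2) ^ d = r n ^ d / 2 ^ d := div_pow _ _ _
      rw [this]
      have hrd : (0:ℝ) < r n ^ d := by positivity
      have : r n ^ d / 2 ^ d ≤ r n ^ d / 2 := by
        apply div_le_div_of_nonneg_left hrd.le two_pos h2d
      linarith
    calc ENNReal.ofReal (K ^ (-s) / 2) * v
        ≤ ENNReal.ofReal ((K * r n ^ α) ^ (-s) * (r n ^ d / 2)) * v := by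
          apply mul_le_mul_left (ENNReal.ofReal_le_ofReal _)
          have e1 : (K * r n ^ α) ^ (-s) = K ^ (-s) * (r n ^ α) ^ (-s) :=
            Real.mul_rpow hK.le (by positivity)
          have e2 : (r n ^ α) ^ (-s) = r n ^ (α * (-s)) := (Real.rpow_mul hrp.le α (-s)).symm
          have e3 : (r n : ℝ) ^ d = r n ^ ((d : ℝ)) := (Real.rpow_natCast _ _).symm
          rw [e1, e2, e3]
          have e4 : r n ^ (α * (-s)) * r n ^ ((d:ℝ)) = r n ^ ((d:ℝ) - α * s) := by
            rw [← Real.rpow_add hrp]; ring_nf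
          have hexp : (1:ℝ) ≤ r n ^ ((d:ℝ) - α * s) := by
            have := Real.rpow_le_rpow_of_exponent_ge hrp h1r (by linarith : (d:ℝ) - α * s ≤ 0)
            simpa using this
          have hKs : (0:ℝ) < K ^ (-s) := Real.rpow_pos_of_pos hK _
          calc K ^ (-s) / 2 = K ^ (-s) * 1 / 2 := by ring
            _ ≤ K ^ (-s) * r n ^ ((d:ℝ) - α * s) / 2 := by
                have := mul_le_mul_of_nonneg_left hexp hKs.le
                linarith
            _ = K ^ (-s) * (r n ^ (α * (-s)) * r n ^ ((d:ℝ))) / 2 := by rw [e4]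
            _ = K ^ (-s) * r n ^ (α * (-s)) * (r n ^ ((d:ℝ)) / 2) := by ring
      _ = ENNReal.ofReal ((K * r n ^ α) ^ (-s)) * (ENNReal.ofReal (r n ^ d / 2) * v) := by
          rw [← mul_assoc, ← ENNReal.ofReal_mul (by positivity)]
      _ ≤ ENNReal.ofReal ((K * r n ^ α) ^ (-s)) * volume (A n) :=
          mul_le_mul_right hA_lb _
      _ = ∫⁻ _ in A n, ENNReal.ofReal ((K * r n ^ α) ^ (-s)) := (setLIntegral_const _ _).symm
      _ ≤ ∫⁻ y in A n, g y := setLIntegral_mono' (hAmeas n) hpt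
  have htop : (⊤ : ℝ≥0∞) ≤ ∫⁻ y in ball x₀ ε, g y := by
    have hconst : ENNReal.ofReal (K ^ (-s) / 2) * v ≠ 0 := by
      apply mul_ne_zero _ hv0
      simp only [ne_eq, ENNReal.ofReal_eq_zero, not_le]
      positivity
    calc (⊤ : ℝ≥0∞) = ∑' _ : ℕ, ENNReal.ofReal (K ^ (-s) / 2) * v :=
          (ENNReal.tsum_const_eq_top_of_ne_zero hconst).symm
      _ ≤ ∑' n, ∫⁻ y in A n, g y := ENNReal.tsum_le_tsum key
      _ = ∫⁻ y in ⋃ n, A n, g y := (lintegral_iUnion hAmeas hdisj g).symm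
      _ ≤ ∫⁻ y in ball x₀ ε, g y := lintegral_mono_set (Set.iUnion_subset hAsub)
  exact top_le_iff.1 htop

/-- Let `O ⊆ ℝ^d` be a nonempty open set, `α ∈ (0,1]`, `s ≥ 1` with `α s ≥ d`, and let
`u : O → ℝ` satisfy `|u| ≤ 1` on `O`, be `α`-Hölder with some constant `C` on `O`, and have
`∫_O (1 - u²)^{-s} < ∞` (the integrand being `+∞` where `|u| = 1`). Then `|u x| < 1` for
every `x ∈ O`. -/
theorem stmt_14 (d : ℕ) (O : Set (EuclideanSpace ℝ (Fin d)))
    (hO : IsOpen O) (hne : O.Nonempty)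
    (α s : ℝ) (hα : α ∈ Set.Ioc (0 : ℝ) 1) (hs : 1 ≤ s) (hαs : (d : ℝ) ≤ α * s)
    (u : EuclideanSpace ℝ (Fin d) → ℝ) (C : ℝ)
    (hub : ∀ x ∈ O, |u x| ≤ 1)
    (hHolder : ∀ x ∈ O, ∀ y ∈ O, |u x - u y| ≤ C * ‖x - y‖ ^ α)
    (hint : ∫⁻ x in O, (ENNReal.ofReal (1 - u x ^ 2)) ^ (-s) < ⊤) :
    ∀ x ∈ O, |u x| < 1 := by
  intro x₀ hx₀
  by_contra hcon
  push_neg at hcon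
  have hx1 : |u x₀| = 1 := le_antisymm (hub x₀ hx₀) hcon
  have hspos : 0 < s := lt_of_lt_of_le one_pos hs
  set K : ℝ := 2 * max C 1 with hKdef
  have hM : (0:ℝ) ≤ max C 1 := le_trans zero_le_one (le_max_right C 1)
  have hK : 0 < K := by rw [hKdef]; linarith [le_max_right C (1:ℝ)]
  have hbound : ∀ y ∈ O, 1 - u y ^ 2 ≤ K * ‖y - x₀‖ ^ α := by
    intro y hy
    have h1 : |u x₀| - |u y| ≤ |u x₀ - u y| := abs_sub_abs_le_abs_sub _ _
    have h2 : |u x₀ - u y| ≤ C * ‖x₀ - y‖ ^ α := hHolder x₀ hx₀ y hy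
    have h3 : ‖x₀ - y‖ = ‖y - x₀‖ := norm_sub_rev _ _
    have hrnn : (0:ℝ) ≤ ‖y - x₀‖ ^ α := Real.rpow_nonneg (norm_nonneg _) _
    have h4 : C * ‖y - x₀‖ ^ α ≤ max C 1 * ‖y - x₀‖ ^ α :=
      mul_le_mul_of_nonneg_right (le_max_left _ _) hrnn
    have h5 : 1 - |u y| ≤ max C 1 * ‖y - x₀‖ ^ α := by
      rw [h3] at h2
      have h0 : 1 - |u y| = |u x₀| - |u y| := by rw [hx1]
      rw [h0]; linarith
    have h6 : |u y| ≤ 1 := hub y hy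
    have h7 : 1 - u y ^ 2 = (1 - |u y|) * (1 + |u y|) := by rw [← sq_abs]; ring
    have h8 : 1 + |u y| ≤ 2 := by linarith
    have h9 : (0:ℝ) ≤ 1 - |u y| := by linarith
    calc 1 - u y ^ 2 = (1 - |u y|) * (1 + |u y|) := h7
      _ ≤ (max C 1 * ‖y - x₀‖ ^ α) * 2 :=
          mul_le_mul h5 h8 (by positivity) (mul_nonneg hM hrnn)
      _ = K * ‖y - x₀‖ ^ α := by rw [hKdef]; ring
  obtain ⟨ε₀, hε₀, hball₀⟩ := Metric.isOpen_iff.1 hO x₀ hx₀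
  set ε : ℝ := min ε₀ 1 with hεdef
  have hε : 0 < ε := lt_min hε₀ one_pos
  have hε1 : ε ≤ 1 := min_le_right _ _
  have hball : Metric.ball x₀ ε ⊆ O :=
    (Metric.ball_subset_ball (min_le_left _ _)).trans hball₀
  rcases Nat.eq_zero_or_pos d with hd | hd
  · -- dimension 0 : the space is a single point where the integrand is infinite
    subst hd
    have hOint : ∫⁻ x in O, (ENNReal.ofReal (1 - u x ^ 2)) ^ (-s) = ⊤ := by
      have hpt : ∀ x ∈ O, (ENNReal.ofReal (1 - u x ^ 2)) ^ (-s) = ⊤ := by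
        intro y hy
        have hyx : y = x₀ := Subsingleton.elim _ _
        subst hyx
        have : u y ^ 2 = 1 := by rw [← sq_abs, hx1]; norm_num
        rw [this]
        simp only [sub_self, ENNReal.ofReal_zero]
        exact ENNReal.zero_rpow_of_neg (by linarith)
      calc ∫⁻ x in O, (ENNReal.ofReal (1 - u x ^ 2)) ^ (-s)
          = ∫⁻ _ in O, (⊤ : ℝ≥0∞) :=
            setLIntegral_congr_fun hO.measurableSet hpt
        _ = ⊤ * volume O := setLIntegral_const _ _
        _ = ⊤ := ENNReal.top_mul (hO.measure_pos volume hne).ne'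
    rw [hOint] at hint
    exact lt_irrefl _ hint
  · have htop := aux_div d hd K α s ε hK hα.1 hspos hαs hε hε1 x₀
    have hge : (⊤ : ℝ≥0∞) ≤ ∫⁻ x in O, (ENNReal.ofReal (1 - u x ^ 2)) ^ (-s) := by
      rw [← htop]
      calc ∫⁻ y in Metric.ball x₀ ε, (ENNReal.ofReal (K * ‖y - x₀‖ ^ α)) ^ (-s)
          ≤ ∫⁻ y in Metric.ball x₀ ε, (ENNReal.ofReal (1 - u y ^ 2)) ^ (-s) := by
            apply setLIntegral_mono' measurableSet_ball
            intro y hy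
            rw [ENNReal.rpow_neg, ENNReal.rpow_neg]
            exact ENNReal.inv_le_inv.2 (ENNReal.rpow_le_rpow
              (ENNReal.ofReal_le_ofReal (hbound y (hball hy))) hspos.le)
        _ ≤ ∫⁻ x in O, (ENNReal.ofReal (1 - u x ^ 2)) ^ (-s) :=
            lintegral_mono_set hball
    exact lt_irrefl _ (lt_of_le_of_lt hge hint)
end

section
/- Let O ⊂ ℝ^d be a nonempty bounded open set, T > 0, α ∈ (0,1] and s ≥ 1 with α·s ≥ d. Let u : [0,T] × cl(O) → ℝ satisfy: |u(t,x)| ≤ 1 for all (t,x); u(t,x) = 0 whenever x ∈ ∂O; there is a constant C such that for every t ∈ [0,T] the function u(t,·) is α-Hölder on cl(O) with constant C; and there is K < ∞ with ∫_O (1 − u(t,x)²)^{−s} dx ≤ K for every t ∈ [0,T]. Then |u(t,x)| < 1 for every (t,x) ∈ [0,T] × cl(O). -/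
open MeasureTheory Metric ENNReal

private lemma rpow_neg_antitone {a b : ℝ≥0∞} (h : a ≤ b) {s : ℝ} (hs : 0 ≤ s) :
    b ^ (-s) ≤ a ^ (-s) := by
  rw [ENNReal.rpow_neg, ENNReal.rpow_neg]
  exact ENNReal.inv_le_inv.mpr (ENNReal.rpow_le_rpow h hs)

private lemma key_divergence (d : ℕ) (hd : 1 ≤ d) (q : ℝ) (hq : (d : ℝ) ≤ q)
    (x₀ : EuclideanSpace ℝ (Fin d)) (r : ℝ) (hr : 0 < r) (hr1 : r ≤ 1) :
    ∫⁻ y in ball x₀ r, (ENNReal.ofReal ‖y - x₀‖) ^ (-q) = ⊤ := by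
  haveI : Nontrivial (EuclideanSpace ℝ (Fin d)) :=
    Module.nontrivial_of_finrank_pos (R := ℝ) (by rw [finrank_euclideanSpace_fin]; omega)
  set B := volume (ball (0 : EuclideanSpace ℝ (Fin d)) 1) with hB
  have hB0 : B ≠ 0 := (measure_ball_pos volume 0 one_pos).ne'
  -- annuli
  set A : ℕ → Set (EuclideanSpace ℝ (Fin d)) :=
    fun n => ball x₀ (r / 2 ^ n) \ ball x₀ (r / 2 ^ (n + 1)) with hA
  have hrn : ∀ n : ℕ, 0 < r / 2 ^ n := fun n => by positivity
  have hmeas : ∀ n, MeasurableSet (A n) :=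
    fun n => measurableSet_ball.diff measurableSet_ball
  have hdisj : Pairwise (Function.onFun Disjoint A) := by
    have key : ∀ m n : ℕ, m < n → Disjoint (A m) (A n) := by
      intro m n h
      have hsub : ball x₀ (r / 2 ^ n) ⊆ ball x₀ (r / 2 ^ (m + 1)) :=
      ball_subset_ball (by
        apply div_le_div_of_nonneg_left hr.le (by positivity)
        exact pow_le_pow_right₀ one_le_two (by omega))
      refine Set.disjoint_left.mpr ?_
      intro y hym hyn
      exact hym.2 (hsub hyn.1)
    intro m n hmn
    rcases hmn.lt_or_gt with h | h
    · exact key m n h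
    · exact (key n m h).symm
  have hsubball : ∀ n, A n ⊆ ball x₀ r := by
    intro n y hy
    exact ball_subset_ball (by
      apply div_le_self hr.le
      exact one_le_pow₀ one_le_two) hy.1
  -- measure of annulus
  have hμball : ∀ ρ : ℝ, 0 ≤ ρ → volume (ball x₀ ρ) = ENNReal.ofReal (ρ ^ d) * B := by
    intro ρ hρ
    rw [Measure.addHaar_ball volume x₀ hρ, finrank_euclideanSpace_fin, hB]
  have hμA : ∀ n, volume (A n)
      = (ENNReal.ofReal ((r / 2 ^ n) ^ d) - ENNReal.ofReal ((r / 2 ^ (n + 1)) ^ d)) * B := by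
    intro n
    rw [hA]
    rw [measure_diff (ball_subset_ball (by
          apply div_le_div_of_nonneg_left hr.le (by positivity)
          exact pow_le_pow_right₀ one_le_two (by omega)))
        measurableSet_ball.nullMeasurableSet measure_ball_lt_top.ne,
      hμball _ (hrn n).le, hμball _ (hrn (n + 1)).le, ENNReal.sub_mul]
    intro _ _; exact measure_ball_lt_top.ne
  -- lower bound constant
  set ε : ℝ≥0∞ := ENNReal.ofReal (1 - (2 : ℝ)⁻¹ ^ d) * B with hε
  have hεne : ε ≠ 0 := by
    rw [hε]
    apply mul_ne_zero _ hB0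
    have : (2 : ℝ)⁻¹ ^ d < 1 :=
      pow_lt_one₀ (by norm_num) (by norm_num) (Nat.one_le_iff_ne_zero.mp hd)
    exact (ENNReal.ofReal_pos.mpr (by linarith)).ne'
  -- lower bound on each annulus integral
  have hlow : ∀ n, ε ≤ ∫⁻ y in A n, (ENNReal.ofReal ‖y - x₀‖) ^ (-q) := by
    intro n
    set ρ : ℝ := r / 2 ^ n with hρdef
    have hρ : 0 < ρ := hrn n
    have hρ1 : ρ ≤ 1 := le_trans (div_le_self hr.le (one_le_pow₀ one_le_two)) hr1
    have hc : ∀ y ∈ A n, (ENNReal.ofReal ρ) ^ (-q) ≤ (ENNReal.ofReal ‖y - x₀‖) ^ (-q) := by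
      intro y hy
      apply rpow_neg_antitone _ (le_trans (by exact_mod_cast Nat.zero_le d) hq)
      apply ENNReal.ofReal_le_ofReal
      have := hy.1
      rw [mem_ball, dist_eq_norm] at this
      exact this.le
    calc ε ≤ (ENNReal.ofReal ρ) ^ (-q) * volume (A n) := by
            rw [hμA n, hε, ENNReal.ofReal_rpow_of_pos hρ,
              ← ENNReal.ofReal_sub _ (by positivity), ← mul_assoc,
              ← ENNReal.ofReal_mul (by positivity)]
            apply mul_le_mul_left (ENNReal.ofReal_le_ofReal _)
            have h1 : (r / 2 ^ (n + 1)) ^ d = ρ ^ d * (2 : ℝ)⁻¹ ^ d := by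
              rw [← mul_pow]; congr 1; rw [hρdef]; ring
            rw [h1, ← Real.rpow_natCast ρ d]
            have h2 : ρ ^ (-q) * (ρ ^ (d : ℝ) - ρ ^ (d : ℝ) * (2:ℝ)⁻¹ ^ d)
                = ρ ^ ((d : ℝ) - q) * (1 - (2:ℝ)⁻¹ ^ d) := by
              rw [sub_eq_add_neg (d : ℝ) q, Real.rpow_add hρ]; ring
            rw [h2]
            have h3 : (1 : ℝ) ≤ ρ ^ ((d : ℝ) - q) :=
              Real.one_le_rpow_of_pos_of_le_one_of_nonpos hρ hρ1 (by linarith)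
            nlinarith [pow_nonneg (by norm_num : (0:ℝ) ≤ 2⁻¹) d,
              pow_lt_one₀ (by norm_num : (0:ℝ) ≤ 2⁻¹) (by norm_num : (2:ℝ)⁻¹ < 1)
                (Nat.one_le_iff_ne_zero.mp hd)]
      _ ≤ ∫⁻ y in A n, (ENNReal.ofReal ‖y - x₀‖) ^ (-q) := by
            rw [← setLIntegral_const]
            exact setLIntegral_mono' (hmeas n) hc
  -- conclude
  have : (⊤ : ℝ≥0∞) ≤ ∫⁻ y in ball x₀ r, (ENNReal.ofReal ‖y - x₀‖) ^ (-q) := by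
    calc (⊤ : ℝ≥0∞) = ∑' _ : ℕ, ε := (ENNReal.tsum_const_eq_top_of_ne_zero hεne).symm
      _ ≤ ∑' n, ∫⁻ y in A n, (ENNReal.ofReal ‖y - x₀‖) ^ (-q) := ENNReal.tsum_le_tsum hlow
      _ = ∫⁻ y in ⋃ n, A n, (ENNReal.ofReal ‖y - x₀‖) ^ (-q) :=
          (lintegral_iUnion hmeas hdisj _).symm
      _ ≤ _ := lintegral_mono_set (Set.iUnion_subset hsubball)
  exact top_le_iff.mp this

private lemma setLIntegral_top_of {s : Set (EuclideanSpace ℝ (Fin d))}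
    (hs : MeasurableSet s) (hμ : volume s ≠ 0) {g : EuclideanSpace ℝ (Fin d) → ℝ≥0∞}
    (h : ∀ y ∈ s, g y = ⊤) : ∫⁻ y in s, g y = ⊤ := by
  refine top_le_iff.mp ?_
  calc (⊤ : ℝ≥0∞) = ⊤ * volume s := (ENNReal.top_mul hμ).symm
    _ = ∫⁻ _ in s, (⊤ : ℝ≥0∞) := (setLIntegral_const _ _).symm
    _ ≤ _ := setLIntegral_mono' hs fun y hy => (h y hy).ge

/-- Pathwise no-contact lemma: let `O ⊂ ℝ^d` be a nonempty bounded open set, `T > 0`,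
`α ∈ (0,1]`, `s ≥ 1` with `α s ≥ d`, and `u : [0,T] × cl(O) → ℝ` with `|u| ≤ 1`,
vanishing on `∂O`, uniformly `α`-Hölder in space with constant `C`, and with
`∫_O (1 - u(t,·)²)^{-s} ≤ K < ∞` for every `t`. Then `|u(t,x)| < 1` everywhere on
`[0,T] × cl(O)`. -/
theorem stmt_15 (d : ℕ) (O : Set (EuclideanSpace ℝ (Fin d)))
    (hO : IsOpen O) (hObd : Bornology.IsBounded O) (hne : O.Nonempty)
    (T : ℝ) (hT : 0 < T)
    (α s : ℝ) (hα : α ∈ Set.Ioc (0 : ℝ) 1) (hs : 1 ≤ s) (hαs : (d : ℝ) ≤ α * s)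
    (u : ℝ → EuclideanSpace ℝ (Fin d) → ℝ)
    (hub : ∀ t ∈ Set.Icc (0 : ℝ) T, ∀ x ∈ closure O, |u t x| ≤ 1)
    (hbdry : ∀ t ∈ Set.Icc (0 : ℝ) T, ∀ x ∈ frontier O, u t x = 0)
    (C : ℝ)
    (hHolder : ∀ t ∈ Set.Icc (0 : ℝ) T, ∀ x ∈ closure O, ∀ y ∈ closure O,
      |u t x - u t y| ≤ C * ‖x - y‖ ^ α)
    (K : ℝ)
    (hint : ∀ t ∈ Set.Icc (0 : ℝ) T,
      ∫⁻ x in O, (ENNReal.ofReal (1 - u t x ^ 2)) ^ (-s) ≤ ENNReal.ofReal K) :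
    ∀ t ∈ Set.Icc (0 : ℝ) T, ∀ x ∈ closure O, |u t x| < 1 := by
  intro t ht x hx
  by_contra hcon
  push_neg at hcon
  have hx1 : |u t x| = 1 := le_antisymm (hub t ht x hx) hcon
  by_cases hxO : x ∈ O
  swap
  · have hxf : x ∈ frontier O := by
      rw [frontier, hO.interior_eq]; exact ⟨hx, hxO⟩
    rw [hbdry t ht x hxf] at hx1; simp at hx1
  obtain ⟨r₀, hr₀, hball₀⟩ := Metric.isOpen_iff.mp hO x hxO
  set r := min r₀ 1 with hrdef
  have hr : 0 < r := lt_min hr₀ one_pos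
  have hr1 : r ≤ 1 := min_le_right _ _
  have hball : ball x r ⊆ O := (ball_subset_ball (min_le_left _ _)).trans hball₀
  have hpt : ∀ y ∈ ball x r,
      (ENNReal.ofReal (2 * C * ‖y - x‖ ^ α)) ^ (-s)
        ≤ (ENNReal.ofReal (1 - u t y ^ 2)) ^ (-s) := by
    intro y hy
    have hyc : y ∈ closure O := subset_closure (hball hy)
    have h1 : 1 - u t y ^ 2 ≤ 2 * C * ‖y - x‖ ^ α := by
      have h2 := hHolder t ht x hx y hyc
      have h3 := hub t ht y hyc
      have h4 : |u t x| - |u t y| ≤ |u t x - u t y| := abs_sub_abs_le_abs_sub _ _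
      have h5 : u t y ^ 2 = |u t y| ^ 2 := (sq_abs _).symm
      have h6 : ‖x - y‖ = ‖y - x‖ := norm_sub_rev _ _
      rw [h6] at h2
      nlinarith [abs_nonneg (u t y)]
    exact rpow_neg_antitone (ENNReal.ofReal_le_ofReal h1) (by linarith)
  have hchain : ∫⁻ y in ball x r, (ENNReal.ofReal (2 * C * ‖y - x‖ ^ α)) ^ (-s)
      ≤ ENNReal.ofReal K := by
    calc _ ≤ ∫⁻ y in ball x r, (ENNReal.ofReal (1 - u t y ^ 2)) ^ (-s) :=
          setLIntegral_mono' measurableSet_ball hpt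
      _ ≤ ∫⁻ y in O, (ENNReal.ofReal (1 - u t y ^ 2)) ^ (-s) := lintegral_mono_set hball
      _ ≤ _ := hint t ht
  have hμr : volume (ball x r) ≠ 0 := (measure_ball_pos volume x hr).ne'
  have htop : ∫⁻ y in ball x r, (ENNReal.ofReal (2 * C * ‖y - x‖ ^ α)) ^ (-s) = ⊤ := by
    rcases le_or_gt C 0 with hC | hC
    · refine setLIntegral_top_of measurableSet_ball hμr fun y hy => ?_
      have h0 : ENNReal.ofReal (2 * C * ‖y - x‖ ^ α) = 0 := by
        rw [ENNReal.ofReal_eq_zero]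
        have : 0 ≤ ‖y - x‖ ^ α := Real.rpow_nonneg (norm_nonneg _) α
        nlinarith
      rw [h0, ENNReal.zero_rpow_of_neg (by linarith)]
    · rcases Nat.eq_zero_or_pos d with hd0 | hd
      · subst hd0
        refine setLIntegral_top_of measurableSet_ball hμr fun y hy => ?_
        have hyx : y = x := Subsingleton.elim y x
        rw [hyx, sub_self, norm_zero, Real.zero_rpow hα.1.ne', mul_zero,
          ENNReal.ofReal_zero, ENNReal.zero_rpow_of_neg (by linarith)]
      · have heq : ∀ y : EuclideanSpace ℝ (Fin d),
            (ENNReal.ofReal (2 * C * ‖y - x‖ ^ α)) ^ (-s)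
            = ENNReal.ofReal ((2 * C) ^ (-s)) * ((ENNReal.ofReal ‖y - x‖) ^ (-(α * s))) := by
          intro y
          rw [ENNReal.ofReal_mul (by linarith), ← ENNReal.ofReal_rpow_of_nonneg
              (norm_nonneg _) hα.1.le,
            ENNReal.mul_rpow_of_ne_top ENNReal.ofReal_ne_top
              (ENNReal.rpow_ne_top_of_nonneg hα.1.le ENNReal.ofReal_ne_top),
            ENNReal.ofReal_rpow_of_pos (by linarith), ← ENNReal.rpow_mul,
            mul_neg]
        simp_rw [heq]
        rw [lintegral_const_mul' _ _ ENNReal.ofReal_ne_top,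
          key_divergence d hd (α * s) hαs x r hr hr1, ENNReal.mul_top]
        exact (ENNReal.ofReal_pos.mpr (Real.rpow_pos_of_pos (by linarith) _)).ne'
  rw [htop] at hchain
  exact ENNReal.ofReal_ne_top (top_le_iff.mp hchain)
end

section
/- Let O ⊂ ℝ^d be a nonempty bounded open set, T > 0, α ∈ (0,1] and s ≥ 1 with α·s ≥ d. Let u : [0,T] × cl(O) → ℝ satisfy: |u(t,x)| ≤ 1 for all (t,x); u(t,x) = 0 whenever x ∈ ∂O; there is a constant C such that for every t ∈ [0,T] the function u(t,·) is α-Hölder on cl(O) with constant C; for every x ∈ cl(O) the map t ↦ u(t,x) is continuous on [0,T]; and there is K < ∞ with ∫_O (1 − u(t,x)²)^{−s} dx ≤ K for every t ∈ [0,T]. Then there exists δ ∈ (0,1) such that sup_{(t,x) ∈ [0,T] × cl(O)} |u(t,x)| ≤ 1 − δ. -/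
open MeasureTheory Metric Filter

/-- Deterministic core of the random separation property: let `O ⊂ ℝ^d` be a nonempty
bounded open set, `T > 0`, `α ∈ (0,1]`, `s ≥ 1` with `α s ≥ d`, and
`u : [0,T] × cl(O) → ℝ` with `|u| ≤ 1`, vanishing on `∂O`, uniformly `α`-Hölder in space
with constant `C`, continuous in time for each fixed `x ∈ cl(O)`, and with
`∫_O (1 - u(t,·)²)^{-s} ≤ K < ∞` for every `t ∈ [0,T]`. Then there exists `δ ∈ (0,1)`
such that `|u(t,x)| ≤ 1 - δ` on all of `[0,T] × cl(O)`. -/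
theorem stmt_18 (d : ℕ) (O : Set (EuclideanSpace ℝ (Fin d)))
    (hO : IsOpen O) (hObd : Bornology.IsBounded O) (hne : O.Nonempty)
    (T : ℝ) (hT : 0 < T)
    (α s : ℝ) (hα : α ∈ Set.Ioc (0 : ℝ) 1) (hs : 1 ≤ s) (hαs : (d : ℝ) ≤ α * s)
    (u : ℝ → EuclideanSpace ℝ (Fin d) → ℝ)
    (hub : ∀ t ∈ Set.Icc (0 : ℝ) T, ∀ x ∈ closure O, |u t x| ≤ 1)
    (hbdry : ∀ t ∈ Set.Icc (0 : ℝ) T, ∀ x ∈ frontier O, u t x = 0)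
    (C : ℝ)
    (hHolder : ∀ t ∈ Set.Icc (0 : ℝ) T, ∀ x ∈ closure O, ∀ y ∈ closure O,
      |u t x - u t y| ≤ C * ‖x - y‖ ^ α)
    (hcont : ∀ x ∈ closure O, ContinuousOn (fun t => u t x) (Set.Icc (0 : ℝ) T))
    (K : ℝ)
    (hint : ∀ t ∈ Set.Icc (0 : ℝ) T,
      ∫⁻ x in O, (ENNReal.ofReal (1 - u t x ^ 2)) ^ (-s) ≤ ENNReal.ofReal K) :
    ∃ δ ∈ Set.Ioo (0 : ℝ) 1,
      ∀ t ∈ Set.Icc (0 : ℝ) T, ∀ x ∈ closure O, |u t x| ≤ 1 - δ := by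
  by_contra hcon
  push_neg at hcon
  have hs0 : (0 : ℝ) < s := lt_of_lt_of_le one_pos hs
  -- extract sequences
  have hseq : ∀ n : ℕ, ∃ t ∈ Set.Icc (0 : ℝ) T, ∃ x ∈ closure O,
      1 - 1 / ((n : ℝ) + 2) < |u t x| := by
    intro n
    refine hcon (1 / ((n : ℝ) + 2)) ⟨by positivity, ?_⟩
    rw [div_lt_one (by positivity)]
    have : (0 : ℝ) ≤ (n : ℝ) := Nat.cast_nonneg n
    linarith
  choose tt htt xx hxx hgt using hseq
  -- compactness
  have hKcpt : IsCompact ((Set.Icc (0 : ℝ) T) ×ˢ closure O) :=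
    isCompact_Icc.prod hObd.isCompact_closure
  have hp : ∀ n : ℕ, (tt n, xx n) ∈ (Set.Icc (0 : ℝ) T) ×ˢ closure O :=
    fun n => ⟨htt n, hxx n⟩
  obtain ⟨⟨t₀, x₀⟩, hmem, φ, hφ, hlim⟩ := hKcpt.tendsto_subseq hp
  have ht₀ : t₀ ∈ Set.Icc (0 : ℝ) T := hmem.1
  have hx₀ : x₀ ∈ closure O := hmem.2
  have htlim : Tendsto (fun n => tt (φ n)) atTop (nhds t₀) :=
    (continuous_fst.tendsto _).comp hlim
  have hxlim : Tendsto (fun n => xx (φ n)) atTop (nhds x₀) :=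
    (continuous_snd.tendsto _).comp hlim
  set C' : ℝ := max C 1 with hC'def
  have hC'0 : (0 : ℝ) < C' := lt_of_lt_of_le one_pos (le_max_right _ _)
  have hHolder' : ∀ t ∈ Set.Icc (0 : ℝ) T, ∀ x ∈ closure O, ∀ y ∈ closure O,
      |u t x - u t y| ≤ C' * ‖x - y‖ ^ α := fun t ht x hx y hy =>
    (hHolder t ht x hx y hy).trans (mul_le_mul_of_nonneg_right (le_max_left C 1)
      (Real.rpow_nonneg (norm_nonneg _) α))
  -- the limit point attains |u| = 1
  have hA : Tendsto (fun n : ℕ => 1 / ((φ n : ℝ) + 2)) atTop (nhds 0) := by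
    have h2 : Tendsto (fun n : ℕ => ((φ n : ℝ) + 2)) atTop atTop :=
      tendsto_atTop_add_const_right _ 2 (tendsto_natCast_atTop_atTop.comp hφ.tendsto_atTop)
    simpa only [one_div, Pi.inv_def] using h2.inv_tendsto_atTop
  have hB : Tendsto (fun n : ℕ => C' * ‖xx (φ n) - x₀‖ ^ α) atTop (nhds 0) := by
    have h1 : Tendsto (fun n : ℕ => ‖xx (φ n) - x₀‖) atTop (nhds 0) := by
      have := (hxlim.sub (tendsto_const_nhds (x := x₀))).norm
      simpa using this
    have h2 := h1.rpow_const (p := α) (Or.inr hα.1.le)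
    rw [Real.zero_rpow (ne_of_gt hα.1)] at h2
    simpa using h2.const_mul C'
  have hCt : Tendsto (fun n : ℕ => |u (tt (φ n)) x₀ - u t₀ x₀|) atTop (nhds 0) := by
    have hc : Tendsto (fun t' => u t' x₀) (nhdsWithin t₀ (Set.Icc 0 T)) (nhds (u t₀ x₀)) :=
      hcont x₀ hx₀ t₀ ht₀
    have hto : Tendsto (fun n => tt (φ n)) atTop (nhdsWithin t₀ (Set.Icc 0 T)) :=
      tendsto_nhdsWithin_iff.2 ⟨htlim, Eventually.of_forall fun n => htt (φ n)⟩
    have := ((hc.comp hto).sub (tendsto_const_nhds (x := u t₀ x₀))).abs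
    simpa using this
  have hone : |u t₀ x₀| = 1 := by
    refine le_antisymm (hub t₀ ht₀ x₀ hx₀) ?_
    have hlim1 : Tendsto (fun n : ℕ => 1 - (1 / ((φ n : ℝ) + 2)
        + C' * ‖xx (φ n) - x₀‖ ^ α + |u (tt (φ n)) x₀ - u t₀ x₀|)) atTop (nhds 1) := by
      have := (tendsto_const_nhds (x := (1 : ℝ)) (f := (atTop : Filter ℕ))).sub
        ((hA.add hB).add hCt)
      simpa using this
    refine le_of_tendsto hlim1 (Eventually.of_forall fun n => ?_)
    have h1 := hgt (φ n)
    have h2 := hHolder' (tt (φ n)) (htt (φ n)) (xx (φ n)) (hxx (φ n)) x₀ hx₀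
    have h3 : |u (tt (φ n)) (xx (φ n))| - |u (tt (φ n)) x₀|
        ≤ |u (tt (φ n)) (xx (φ n)) - u (tt (φ n)) x₀| := abs_sub_abs_le_abs_sub _ _
    have h4 : |u (tt (φ n)) x₀| - |u t₀ x₀| ≤ |u (tt (φ n)) x₀ - u t₀ x₀| :=
      abs_sub_abs_le_abs_sub _ _
    have h5 : (0 : ℝ) ≤ |u (tt (φ n)) x₀ - u t₀ x₀| := abs_nonneg _
    linarith
  -- now derive contradiction from the integral bound at t₀
  rcases Nat.eq_zero_or_pos d with hd | hd
  · -- dimension 0 : the space is a single point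
    subst hd
    have hfx : ∀ x ∈ O, (ENNReal.ofReal (1 - u t₀ x ^ 2)) ^ (-s) = ⊤ := by
      intro x hx
      have hx0 : x = x₀ := Subsingleton.elim x x₀
      subst hx0
      have hsq : u t₀ x ^ 2 = 1 := by
        have h := hone
        nlinarith [sq_abs (u t₀ x)]
      rw [hsq, sub_self, ENNReal.ofReal_zero, ENNReal.zero_rpow_of_neg (by linarith)]
    have htop : (∫⁻ x in O, (ENNReal.ofReal (1 - u t₀ x ^ 2)) ^ (-s)) = ⊤ := by
      rw [setLIntegral_congr_fun_ae hO.measurableSet (ae_of_all _ hfx), setLIntegral_const,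
        ENNReal.top_mul (hO.measure_pos volume hne).ne']
    have hK := hint t₀ ht₀
    rw [htop] at hK
    exact ENNReal.ofReal_ne_top (top_le_iff.1 hK)
  · -- dimension ≥ 1
    haveI : Nontrivial (EuclideanSpace ℝ (Fin d)) :=
      Module.nontrivial_of_finrank_pos (R := ℝ)
        (by rw [finrank_euclideanSpace_fin]; exact hd)
    have hx₀' : x₀ ∈ O ∪ frontier O := (closure_eq_self_union_frontier O) ▸ hx₀
    rcases hx₀' with hx₀O | hx₀F
    swap
    · rw [hbdry t₀ ht₀ x₀ hx₀F] at hone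
      norm_num at hone
    obtain ⟨ε, hε, hball⟩ := Metric.isOpen_iff.1 hO x₀ hx₀O
    set r : ℝ := min (ε / 2) 1 with hrdef
    have hr0 : 0 < r := lt_min (by linarith) one_pos
    have hr1 : r ≤ 1 := min_le_right _ _
    have hrε : r < ε := lt_of_le_of_lt (min_le_left _ _) (by linarith)
    have hrball : ball x₀ r ⊆ O := (ball_subset_ball hrε.le).trans hball
    set ρ : ℕ → ℝ := fun k => r * (1 / 2) ^ k with hρdef
    have hρpos : ∀ k, 0 < ρ k := fun k => by positivity
    have hρle1 : ∀ k, ρ k ≤ 1 := by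
      intro k
      have h1 : ((1 : ℝ) / 2) ^ k ≤ 1 := pow_le_one₀ (by norm_num) (by norm_num)
      calc r * (1 / 2) ^ k ≤ 1 * 1 :=
            mul_le_mul hr1 h1 (by positivity) (by norm_num)
        _ = 1 := by norm_num
    have hρanti : ∀ {i j : ℕ}, i ≤ j → ρ j ≤ ρ i := by
      intro i j hij
      exact mul_le_mul_of_nonneg_left
        (pow_le_pow_of_le_one (by norm_num) (by norm_num) hij) hr0.le
    have hρler : ∀ k, ρ k ≤ r := by
      intro k
      have := hρanti (Nat.zero_le k)
      simpa [hρdef] using this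
    have hρsucc : ∀ k, ρ (k + 1) = ρ k * (1 / 2) := by
      intro k; simp only [hρdef, pow_succ]; ring
    set A : ℕ → Set (EuclideanSpace ℝ (Fin d)) :=
      fun k => ball x₀ (ρ k) \ ball x₀ (ρ (k + 1)) with hAdef
    have hmA : ∀ k, MeasurableSet (A k) :=
      fun k => measurableSet_ball.diff measurableSet_ball
    have hdisj : Pairwise (Function.onFun Disjoint A) := by
      intro i j hij
      wlog h : i < j generalizing i j
      · exact (this hij.symm (hij.lt_or_gt.resolve_left h)).symm
      refine Set.disjoint_left.2 ?_
      rintro x ⟨hx1, hx2⟩ ⟨hx3, hx4⟩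
      exact hx2 (mem_ball.2 (lt_of_lt_of_le (mem_ball.1 hx3) (hρanti h)))
    -- pointwise lower bound on each annulus
    have hpt : ∀ k, ∀ x ∈ A k,
        ENNReal.ofReal ((2 * C' * (ρ k) ^ α) ^ (-s))
          ≤ (ENNReal.ofReal (1 - u t₀ x ^ 2)) ^ (-s) := by
      intro k x hx
      have hxO : x ∈ O := hrball (mem_ball.2 (lt_of_lt_of_le (mem_ball.1 hx.1) (hρler k)))
      have hxcl : x ∈ closure O := subset_closure hxO
      have hxd : ‖x - x₀‖ ≤ ρ k := by
        have h := mem_ball.1 hx.1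
        rw [dist_eq_norm] at h
        exact h.le
      have h6 : ‖x - x₀‖ ^ α ≤ (ρ k) ^ α :=
        Real.rpow_le_rpow (norm_nonneg _) hxd hα.1.le
      have h2 := hHolder' t₀ ht₀ x₀ hx₀ x hxcl
      rw [norm_sub_rev] at h2
      have h3' : 1 - |u t₀ x| ≤ C' * (ρ k) ^ α := by
        have hh := abs_sub_abs_le_abs_sub (u t₀ x₀) (u t₀ x)
        have := mul_le_mul_of_nonneg_left h6 hC'0.le
        rw [hone] at hh
        linarith
      have h7 : |u t₀ x| ≤ 1 := hub t₀ ht₀ x hxcl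
      have key : 1 - u t₀ x ^ 2 ≤ 2 * C' * (ρ k) ^ α := by
        have h8 : (1 - |u t₀ x|) * (1 + |u t₀ x|) ≤ (C' * (ρ k) ^ α) * 2 :=
          mul_le_mul h3' (by linarith [abs_nonneg (u t₀ x)]) (by positivity)
            (by positivity)
        nlinarith [sq_abs (u t₀ x)]
      have hB0 : (0 : ℝ) < 2 * C' * (ρ k) ^ α := by positivity
      rw [← ENNReal.ofReal_rpow_of_pos hB0, ENNReal.rpow_neg, ENNReal.rpow_neg]
      exact ENNReal.inv_le_inv.2
        (ENNReal.rpow_le_rpow (ENNReal.ofReal_le_ofReal key) hs0.le)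
    -- measure of each annulus
    have hmeasA : ∀ k, volume (A k) =
        ENNReal.ofReal ((ρ k) ^ d - (ρ (k + 1)) ^ d)
          * volume (ball (0 : EuclideanSpace ℝ (Fin d)) 1) := by
      intro k
      have hsub : ball x₀ (ρ (k + 1)) ⊆ ball x₀ (ρ k) :=
        ball_subset_ball (hρanti k.le_succ)
      rw [hAdef]
      rw [measure_diff hsub measurableSet_ball.nullMeasurableSet measure_ball_lt_top.ne,
        Measure.addHaar_ball _ _ (hρpos k).le, Measure.addHaar_ball _ _ (hρpos (k + 1)).le,
        finrank_euclideanSpace_fin,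
        ← ENNReal.sub_mul (fun _ _ => measure_ball_lt_top.ne),
        ← ENNReal.ofReal_sub _ (by positivity)]
    -- each annulus contributes at least c₀
    set c₀ : ENNReal := ENNReal.ofReal ((2 * C') ^ (-s) * (1 - (1 / 2 : ℝ) ^ d))
        * volume (ball (0 : EuclideanSpace ℝ (Fin d)) 1) with hc₀def
    have hhalf : ((1 : ℝ) / 2) ^ d < 1 :=
      pow_lt_one₀ (by norm_num) (by norm_num) hd.ne'
    have hc₀0 : c₀ ≠ 0 := by
      refine mul_ne_zero ?_ (measure_ball_pos _ _ one_pos).ne'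
      rw [ne_eq, ENNReal.ofReal_eq_zero, not_le]
      have := Real.rpow_pos_of_pos (by linarith : (0 : ℝ) < 2 * C') (-s)
      nlinarith
    have hannulus : ∀ k, c₀ ≤ ∫⁻ x in A k, (ENNReal.ofReal (1 - u t₀ x ^ 2)) ^ (-s) := by
      intro k
      have hstep1 : ENNReal.ofReal ((2 * C' * (ρ k) ^ α) ^ (-s)) * volume (A k)
          ≤ ∫⁻ x in A k, (ENNReal.ofReal (1 - u t₀ x ^ 2)) ^ (-s) := by
        rw [← setLIntegral_const]
        exact lintegral_mono_ae ((ae_restrict_iff' (hmA k)).2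
          (ae_of_all _ fun x hx => hpt k x hx))
      refine le_trans ?_ hstep1
      rw [hmeasA k, ← mul_assoc, ← ENNReal.ofReal_mul
        (Real.rpow_nonneg (by positivity) _)]
      refine mul_le_mul_left (ENNReal.ofReal_le_ofReal ?_) _
      -- real inequality
      have hρk := hρpos k
      have hd1 : (ρ k) ^ d - (ρ (k + 1)) ^ d = (ρ k) ^ d * (1 - (1 / 2 : ℝ) ^ d) := by
        rw [hρsucc k, mul_pow]; ring
      have hsplit : (2 * C' * (ρ k) ^ α) ^ (-s)
          = (2 * C') ^ (-s) * ((ρ k) ^ α) ^ (-s) :=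
        Real.mul_rpow (by positivity) (Real.rpow_nonneg hρk.le α)
      have hexp : ((ρ k) ^ α) ^ (-s) = (ρ k) ^ (α * (-s)) :=
        (Real.rpow_mul hρk.le α (-s)).symm
      have hnat : (ρ k) ^ d = (ρ k) ^ (d : ℝ) := (Real.rpow_natCast (ρ k) d).symm
      have hcomb : (ρ k) ^ (α * (-s)) * (ρ k) ^ (d : ℝ) = (ρ k) ^ ((d : ℝ) - α * s) := by
        rw [← Real.rpow_add hρk]; ring_nf
      have hge1 : (1 : ℝ) ≤ (ρ k) ^ ((d : ℝ) - α * s) :=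
        Real.one_le_rpow_of_pos_of_le_one_of_nonpos hρk (hρle1 k) (by linarith)
      have hpos2 : (0 : ℝ) < (2 * C') ^ (-s) :=
        Real.rpow_pos_of_pos (by linarith) _
      calc (2 * C') ^ (-s) * (1 - (1 / 2 : ℝ) ^ d)
          ≤ (2 * C') ^ (-s) * ((ρ k) ^ ((d : ℝ) - α * s) * (1 - (1 / 2 : ℝ) ^ d)) := by
            have h9 : (0 : ℝ) ≤ 1 - (1 / 2 : ℝ) ^ d := by linarith
            nlinarith [mul_le_mul_of_nonneg_left
              (mul_le_mul_of_nonneg_right hge1 h9) hpos2.le]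
        _ = (2 * C' * (ρ k) ^ α) ^ (-s) * ((ρ k) ^ d - (ρ (k + 1)) ^ d) := by
            rw [hd1, hsplit, hexp, hnat, ← hcomb]; ring
    -- summing up : the integral is infinite
    have hUsub : (⋃ k, A k) ⊆ O := by
      refine Set.iUnion_subset fun k => ?_
      refine Set.Subset.trans Set.diff_subset ?_
      exact (ball_subset_ball (hρler k)).trans hrball
    have htop : (∫⁻ x in O, (ENNReal.ofReal (1 - u t₀ x ^ 2)) ^ (-s)) = ⊤ := by
      rw [← top_le_iff]
      calc (⊤ : ENNReal) = ∑' _ : ℕ, c₀ := (ENNReal.tsum_const_eq_top_of_ne_zero hc₀0).symm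
        _ ≤ ∑' k, ∫⁻ x in A k, (ENNReal.ofReal (1 - u t₀ x ^ 2)) ^ (-s) :=
            ENNReal.tsum_le_tsum hannulus
        _ = ∫⁻ x in ⋃ k, A k, (ENNReal.ofReal (1 - u t₀ x ^ 2)) ^ (-s) :=
            (lintegral_iUnion hmA hdisj _).symm
        _ ≤ ∫⁻ x in O, (ENNReal.ofReal (1 - u t₀ x ^ 2)) ^ (-s) :=
            lintegral_mono_set hUsub
    have hK := hint t₀ ht₀
    rw [htop] at hK
    exact ENNReal.ofReal_ne_top (top_le_iff.1 hK)
end
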